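/- Let g be a Lie algebra of vector fields containing translations and the dilation x^i∂_i. Any operator A from weight-δ symbols homogeneous of degree k in p to weight-δ symbols of degree l < k that commutes with the actions L^δ of translations and dilation is a differential operator with constant coefficients in the generators p_i, ∂_{x^i}, ∂_{p_i}, whose degree in ∂_{x^i} equals its degree in ∂_{p_i} minus its degree in p_i; hence the space of such invariant operators is finite-dimensional and independent of δ. -/

import Mathlib

open MvPolynomial

noncomputable section

/-- Polynomial symbols: polynomial functions on `T*ℝⁿ`; `Sum.inl` are the `x` variables,
`Sum.inr` the fiber variables `p`. -/
abbrev PolySym (n : ℕ) := MvPolynomial (Fin n ⊕ Fin n) ℝ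

/-- Polynomial functions on `ℝⁿ` (densities are identified with these). -/
abbrev PolyDen (n : ℕ) := MvPolynomial (Fin n) ℝ

/-- Polynomial vector fields on `ℝⁿ`, given by their components. -/
abbrev PolyVF (n : ℕ) := Fin n → PolyDen n

/-- `∂/∂x^i` on symbols. -/
def dxOp (n : ℕ) (i : Fin n) : Module.End ℝ (PolySym n) := (pderiv (Sum.inl i)).toLinearMap

/-- `∂/∂p_i` on symbols. -/
def dpOp (n : ℕ) (i : Fin n) : Module.End ℝ (PolySym n) := (pderiv (Sum.inr i)).toLinearMap

/-- Multiplication by a symbol. -/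
def mulOp (n : ℕ) (q : PolySym n) : Module.End ℝ (PolySym n) := LinearMap.mulLeft ℝ q

/-- The symbol `x^i`. -/
def xVar (n : ℕ) (i : Fin n) : PolySym n := X (Sum.inl i)

/-- The symbol `p_i`. -/
def pVar (n : ℕ) (i : Fin n) : PolySym n := X (Sum.inr i)

/-- A polynomial in `x` viewed as a symbol. -/
def liftX (n : ℕ) (f : PolyDen n) : PolySym n := rename Sum.inl f

/-- Divergence of a vector field. -/
def divVF (n : ℕ) (Xf : PolyVF n) : PolyDen n := ∑ i, pderiv i (Xf i)

/-- Weight function computing the degree in the `p` variables. -/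
def pwt (n : ℕ) : Fin n ⊕ Fin n → ℕ := Sum.elim (fun _ => 0) (fun _ => 1)

/-- Homogeneity of degree `k` in the fiber variables `p`. -/
def IsPHomog (n : ℕ) (P : PolySym n) (k : ℕ) : Prop := IsWeightedHomogeneous (pwt n) P k

/-- The weight-`δ` action `L^δ_X = X^i ∂_{x^i} - p_j (∂_{x^i} X^j) ∂_{p_i} + δ Div(X)` of a
vector field on symbols. -/
def Lop (n : ℕ) (δ : ℝ) (Xf : PolyVF n) : Module.End ℝ (PolySym n) :=
  (∑ i, mulOp n (liftX n (Xf i)) ∘ₗ dxOp n i)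
    - (∑ i, ∑ j, mulOp n (pVar n j * liftX n (pderiv i (Xf j))) ∘ₗ dpOp n i)
    + δ • mulOp n (liftX n (divVF n Xf))

/-- The action `ℓ^λ_X = X + λ Div(X)` of a vector field on `λ`-densities. -/
def ellOp (n : ℕ) (lam : ℝ) (Xf : PolyVF n) : Module.End ℝ (PolyDen n) :=
  (∑ i, LinearMap.mulLeft ℝ (Xf i) ∘ₗ (pderiv i).toLinearMap)
    + lam • LinearMap.mulLeft ℝ (divVF n Xf)

/-- Lie bracket of polynomial vector fields. -/
def bracketVF (n : ℕ) (Xf Yf : PolyVF n) : PolyVF n :=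
  fun i => ∑ j, (Xf j * pderiv j (Yf i) - Yf j * pderiv j (Xf i))
/-- The trace operator `T = η_{ij} ∂_{p_i} ∂_{p_j}` for the diagonal metric with entries `ε`. -/
def traceOp (n : ℕ) (ε : Fin n → ℝ) : Module.End ℝ (PolySym n) :=
  ∑ i, ε i • (dpOp n i ∘ₗ dpOp n i)

/-- The Euler operator `E = p_i ∂_{p_i}`. -/
def eulerOp (n : ℕ) : Module.End ℝ (PolySym n) := ∑ i, mulOp n (pVar n i) ∘ₗ dpOp n i

/-- The quadratic symbol `R = η^{ij} p_i p_j` (the metric). -/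
def rQuad (n : ℕ) (ε : Fin n → ℝ) : PolySym n := ∑ i, ε i • (pVar n i * pVar n i)

/-- Multiplication by the metric symbol `R`. -/
def rOp (n : ℕ) (ε : Fin n → ℝ) : Module.End ℝ (PolySym n) := mulOp n (rQuad n ε)

/-- The divergence operator `D = ∂_{x^i} ∂_{p_i}` on symbols. -/
def divOp (n : ℕ) : Module.End ℝ (PolySym n) := ∑ i, dxOp n i ∘ₗ dpOp n i

/-- The gradient operator `G = η^{ij} p_i ∂_{x^j}`. -/
def gradOp (n : ℕ) (ε : Fin n → ℝ) : Module.End ℝ (PolySym n) :=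
  ∑ i, ε i • (mulOp n (pVar n i) ∘ₗ dxOp n i)

/-- The translation vector field `∂_i`. -/
def transVF (n : ℕ) (i : Fin n) : PolyVF n := fun j => if j = i then 1 else 0

/-- The dilation vector field `x^i ∂_i`. -/
def dilVF (n : ℕ) : PolyVF n := fun j => X j

/-- The rotation vector field `x_j ∂_i - x_i ∂_j` for the diagonal metric `ε`. -/
def rotVF (n : ℕ) (ε : Fin n → ℝ) (i j : Fin n) : PolyVF n :=
  fun m => (if m = i then ε j • X j else 0) - (if m = j then ε i • X i else 0)

/-- The conformal inversion `X_i = x_j x^j ∂_i - 2 x_i x^j ∂_j`. -/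
def invVF (n : ℕ) (ε : Fin n → ℝ) (i : Fin n) : PolyVF n :=
  fun j => (if j = i then ∑ m, ε m • (X m * X m) else 0) - (2 * ε i) • (X i * X j)

/-- Generators of the conformal Lie algebra: translations, rotations, the dilation and the
conformal inversions. -/
def confGenSet (n : ℕ) (ε : Fin n → ℝ) : Set (PolyVF n) :=
  Set.range (transVF n) ∪ {Xf | ∃ i j, Xf = rotVF n ε i j} ∪ {dilVF n} ∪
    Set.range (invVF n ε)

/-- The symbol monomial `p^a`. -/
def pMonomial (n : ℕ) (a : Fin n →₀ ℕ) : PolySym n := monomial (a.mapDomain Sum.inr) 1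

/-- The constant-coefficient differential operator `∂^b` on symbols, `b` a multi-index in the
variables `(x, p)`. -/
def derivMultiSym (n : ℕ) (b : (Fin n ⊕ Fin n) →₀ ℕ) (P : PolySym n) : PolySym n :=
  ∑ m ∈ P.support, (P.coeff m * ∏ v, (Nat.descFactorial (m v) (b v) : ℝ)) • monomial (m - b) 1

namespace St11
variable {n : ℕ}

/-- degree of a multi-index -/
def deg (m : Fin n →₀ ℕ) : ℕ := ∑ i, m i
def xdeg (μ : Fin n ⊕ Fin n →₀ ℕ) : ℕ := ∑ i, μ (Sum.inl i)
def pdeg (μ : Fin n ⊕ Fin n →₀ ℕ) : ℕ := ∑ i, μ (Sum.inr i)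
def xemb (m : Fin n →₀ ℕ) : Fin n ⊕ Fin n →₀ ℕ := m.mapDomain Sum.inl
def pemb (b : Fin n →₀ ℕ) : Fin n ⊕ Fin n →₀ ℕ := b.mapDomain Sum.inr
def emb (m b : Fin n →₀ ℕ) : Fin n ⊕ Fin n →₀ ℕ := xemb m + pemb b
def mono (m b : Fin n →₀ ℕ) : PolySym n := monomial (emb m b) 1
def xwt (n : ℕ) : Fin n ⊕ Fin n → ℕ := Sum.elim (fun _ => 1) (fun _ => 0)
def exOp (n : ℕ) : Module.End ℝ (PolySym n) := ∑ i, mulOp n (xVar n i) ∘ₗ dxOp n i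
def binP (m β : Fin n →₀ ℕ) : ℕ := ∏ i, (m i).choose (β i)
def descP (m β : Fin n →₀ ℕ) : ℕ := ∏ i, (m i).descFactorial (β i)
def factP (β : Fin n →₀ ℕ) : ℕ := ∏ i, (β i).factorial

@[simp] lemma xemb_apply_inl (m : Fin n →₀ ℕ) (i : Fin n) : xemb m (Sum.inl i) = m i :=
  Finsupp.mapDomain_apply Sum.inl_injective m i
@[simp] lemma xemb_apply_inr (m : Fin n →₀ ℕ) (i : Fin n) : xemb m (Sum.inr i) = 0 :=
  Finsupp.mapDomain_notin_range m _ (by simp)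
@[simp] lemma pemb_apply_inr (m : Fin n →₀ ℕ) (i : Fin n) : pemb m (Sum.inr i) = m i :=
  Finsupp.mapDomain_apply Sum.inr_injective m i
@[simp] lemma pemb_apply_inl (m : Fin n →₀ ℕ) (i : Fin n) : pemb m (Sum.inl i) = 0 :=
  Finsupp.mapDomain_notin_range m _ (by simp)
@[simp] lemma emb_apply_inl (m b : Fin n →₀ ℕ) (i : Fin n) : emb m b (Sum.inl i) = m i := by
  simp [emb]
@[simp] lemma emb_apply_inr (m b : Fin n →₀ ℕ) (i : Fin n) : emb m b (Sum.inr i) = b i := by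
  simp [emb]

lemma deg_eq_sum (m : Fin n →₀ ℕ) : m.sum (fun _ e => e) = deg m :=
  Finsupp.sum_fintype _ _ (fun _ => rfl)

lemma weight_pwt (μ : Fin n ⊕ Fin n →₀ ℕ) : Finsupp.weight (pwt n) μ = pdeg μ := by
  rw [Finsupp.weight_apply, Finsupp.sum_fintype _ _ (fun _ => by simp)]
  simp [pwt, pdeg, Fintype.sum_sum_type]

lemma weight_xwt (μ : Fin n ⊕ Fin n →₀ ℕ) : Finsupp.weight (xwt n) μ = xdeg μ := by
  rw [Finsupp.weight_apply, Finsupp.sum_fintype _ _ (fun _ => by simp)]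
  simp [xwt, xdeg, Fintype.sum_sum_type]

lemma xdeg_emb (m b : Fin n →₀ ℕ) : xdeg (emb m b) = deg m := by
  simp [xdeg, deg]
lemma pdeg_emb (m b : Fin n →₀ ℕ) : pdeg (emb m b) = deg b := by
  simp [pdeg, deg]

lemma isPHomog_mono {m b : Fin n →₀ ℕ} {k : ℕ} (h : deg b = k) : IsPHomog n (mono m b) k :=
  isWeightedHomogeneous_monomial _ _ _ (by rw [weight_pwt, pdeg_emb, h])

lemma phomog_support {P : PolySym n} {k : ℕ} (h : IsPHomog n P k) {μ} (hμ : μ ∈ P.support) :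
    pdeg μ = k := by
  have := h (MvPolynomial.mem_support_iff.mp hμ)
  rwa [weight_pwt] at this


variable {n : ℕ}

lemma term_apply (v : Fin n ⊕ Fin n) (μ : Fin n ⊕ Fin n →₀ ℕ) (c : ℝ) :
    (mulOp n (X v) ∘ₗ (pderiv v).toLinearMap) (monomial μ c) = (μ v : ℝ) • monomial μ c := by
  show X v * (pderiv v (monomial μ c)) = (μ v : ℝ) • monomial μ c
  rw [pderiv_monomial, X, monomial_mul]
  rcases Nat.eq_zero_or_pos (μ v) with h | h
  · simp [h]
  · have he : Finsupp.single v 1 + (μ - Finsupp.single v 1) = μ := by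
      ext a
      rcases eq_or_ne a v with rfl | hne
      · simp [Finsupp.tsub_apply]; omega
      · simp [Finsupp.tsub_apply, Finsupp.single_eq_of_ne' (Ne.symm hne)]
    rw [he, smul_monomial, smul_eq_mul]; ring_nf

lemma opSum_monomial (v : Fin n → Fin n ⊕ Fin n) (μ : Fin n ⊕ Fin n →₀ ℕ) (c : ℝ) :
    (∑ i, mulOp n (X (v i)) ∘ₗ (pderiv (v i)).toLinearMap) (monomial μ c)
      = ((∑ i, μ (v i) : ℕ) : ℝ) • monomial μ c := by
  rw [LinearMap.sum_apply, Nat.cast_sum, Finset.sum_smul]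
  exact Finset.sum_congr rfl fun i _ => term_apply _ _ _

lemma coeff_opSum (v : Fin n → Fin n ⊕ Fin n) (μ : Fin n ⊕ Fin n →₀ ℕ) (P : PolySym n) :
    coeff μ ((∑ i, mulOp n (X (v i)) ∘ₗ (pderiv (v i)).toLinearMap) P)
      = ((∑ i, μ (v i) : ℕ) : ℝ) * coeff μ P := by
  conv_lhs => rw [P.as_sum, map_sum]
  rw [coeff_sum]
  have hc : ∀ ν ∈ P.support,
      coeff μ ((∑ i, mulOp n (X (v i)) ∘ₗ (pderiv (v i)).toLinearMap) (monomial ν (coeff ν P)))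
        = if ν = μ then ((∑ i, μ (v i) : ℕ) : ℝ) * coeff μ P else 0 := by
    intro ν _
    rw [opSum_monomial, coeff_smul, coeff_monomial]
    rcases eq_or_ne ν μ with rfl | h
    · simp [smul_eq_mul]
    · simp [h]
  rw [Finset.sum_congr rfl hc, Finset.sum_ite_eq' P.support μ]
  split_ifs with h
  · rfl
  · rw [MvPolynomial.notMem_support_iff.mp h, mul_zero]

lemma exOp_eq (P : PolySym n) :
    exOp n P = (∑ i, mulOp n (X (Sum.inl i)) ∘ₗ (pderiv (Sum.inl i)).toLinearMap) P := rfl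
lemma eulerOp_eq (P : PolySym n) :
    eulerOp n P = (∑ i, mulOp n (X (Sum.inr i)) ∘ₗ (pderiv (Sum.inr i)).toLinearMap) P := rfl

lemma coeff_exOp (μ : Fin n ⊕ Fin n →₀ ℕ) (P : PolySym n) :
    coeff μ (exOp n P) = (xdeg μ : ℝ) * coeff μ P := by
  rw [exOp_eq, coeff_opSum]; rfl

lemma coeff_eulerOp (μ : Fin n ⊕ Fin n →₀ ℕ) (P : PolySym n) :
    coeff μ (eulerOp n P) = (pdeg μ : ℝ) * coeff μ P := by
  rw [eulerOp_eq, coeff_opSum]; rfl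

lemma eig1x {P : PolySym n} {d : ℕ} (h : ∀ μ ∈ P.support, xdeg μ = d) :
    exOp n P = (d : ℝ) • P := by
  apply MvPolynomial.ext; intro μ
  rw [coeff_exOp, coeff_smul, smul_eq_mul]
  by_cases hμ : μ ∈ P.support
  · rw [h μ hμ]
  · rw [MvPolynomial.notMem_support_iff.mp hμ, mul_zero, mul_zero]

lemma eig1p {P : PolySym n} {d : ℕ} (h : ∀ μ ∈ P.support, pdeg μ = d) :
    eulerOp n P = (d : ℝ) • P := by
  apply MvPolynomial.ext; intro μ
  rw [coeff_eulerOp, coeff_smul, smul_eq_mul]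
  by_cases hμ : μ ∈ P.support
  · rw [h μ hμ]
  · rw [MvPolynomial.notMem_support_iff.mp hμ, mul_zero, mul_zero]

lemma eig2x {P : PolySym n} {r : ℝ} (h : exOp n P = r • P) :
    ∀ μ ∈ P.support, (xdeg μ : ℝ) = r := by
  intro μ hμ
  have h1 : coeff μ (exOp n P) = r * coeff μ P := by rw [h, coeff_smul, smul_eq_mul]
  rw [coeff_exOp] at h1
  exact mul_right_cancel₀ (MvPolynomial.mem_support_iff.mp hμ) h1

lemma negx {P : PolySym n} {r : ℝ} (h : exOp n P = r • P) (hr : r < 0) : P = 0 := by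
  by_contra hP
  obtain ⟨μ, hμ⟩ := Finset.nonempty_iff_ne_empty.mpr (fun he => hP (support_eq_empty.mp he))
  have := eig2x h μ hμ
  have : (0:ℝ) ≤ r := this ▸ Nat.cast_nonneg _
  linarith

lemma ker {P : PolySym n} (h : ∀ i, pderiv (Sum.inl i) P = 0)
    (hs : ∀ μ ∈ P.support, xdeg μ ≠ 0) : P = 0 := by
  have h0 : exOp n P = 0 := by
    rw [exOp, LinearMap.sum_apply]
    refine Finset.sum_eq_zero fun i _ => ?_
    show mulOp n (xVar n i) (pderiv (Sum.inl i) P) = 0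
    rw [h i, map_zero]
  by_contra hP
  obtain ⟨μ, hμ⟩ := Finset.nonempty_iff_ne_empty.mpr (fun he => hP (support_eq_empty.mp he))
  have h1 : coeff μ (exOp n P) = 0 := by rw [h0, coeff_zero]
  rw [coeff_exOp] at h1
  rcases mul_eq_zero.mp h1 with h2 | h2
  · exact hs μ hμ (by exact_mod_cast h2)
  · exact MvPolynomial.mem_support_iff.mp hμ h2


lemma pderiv_one' (i : Fin n) : pderiv i (1 : PolyDen n) = 0 := by
  simp

lemma Lop_trans (δ : ℝ) (i : Fin n) : Lop n δ (transVF n i) = dxOp n i := by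
  have hd : ∀ i' j : Fin n, pderiv i' (transVF n i j) = 0 := by
    intro i' j
    rw [transVF]
    split_ifs with h
    · exact pderiv_one' i'
    · exact map_zero _
  have hdiv : divVF n (transVF n i) = 0 := by
    rw [divVF]; exact Finset.sum_eq_zero fun j _ => hd j j
  rw [Lop, hdiv]
  have h2 : (∑ i', ∑ j, mulOp n (pVar n j * liftX n (pderiv i' (transVF n i j))) ∘ₗ dpOp n i')
      = 0 := by
    refine Finset.sum_eq_zero fun i' _ => Finset.sum_eq_zero fun j _ => ?_
    rw [hd i' j, liftX, map_zero, mul_zero, mulOp, LinearMap.mulLeft_zero_eq_zero,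
      LinearMap.zero_comp]
  have h3 : (∑ i', mulOp n (liftX n (transVF n i i')) ∘ₗ dxOp n i') = dxOp n i := by
    have : ∀ i' : Fin n, mulOp n (liftX n (transVF n i i')) ∘ₗ dxOp n i'
        = if i' = i then dxOp n i' else 0 := by
      intro i'
      rw [transVF]
      split_ifs with h
      · rw [liftX, map_one, mulOp, LinearMap.mulLeft_one, LinearMap.id_comp]
      · rw [liftX, map_zero, mulOp, LinearMap.mulLeft_zero_eq_zero, LinearMap.zero_comp]
    rw [Finset.sum_congr rfl fun i' _ => this i']
    simp
  rw [h2, h3, liftX, map_zero, mulOp, LinearMap.mulLeft_zero_eq_zero]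
  simp

lemma mulOp_natCast (m : ℕ) : mulOp n ((m : ℕ) : PolySym n) = (m : ℝ) • 1 := by
  refine LinearMap.ext fun P => ?_
  show ((m : ℕ) : PolySym n) * P = ((m:ℝ) • (1 : Module.End ℝ (PolySym n))) P
  rw [LinearMap.smul_apply, Module.End.one_apply, ← nsmul_eq_mul, ← Nat.cast_smul_eq_nsmul ℝ]

lemma Lop_dil (δ : ℝ) : Lop n δ (dilVF n) = exOp n - eulerOp n + (δ * n) • 1 := by
  have h1 : (∑ i, mulOp n (liftX n (dilVF n i)) ∘ₗ dxOp n i) = exOp n := by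
    refine Finset.sum_congr rfl fun i _ => ?_
    rw [dilVF, liftX, rename_X]; rfl
  have h2 : (∑ i, ∑ j, mulOp n (pVar n j * liftX n (pderiv i (dilVF n j))) ∘ₗ dpOp n i)
      = eulerOp n := by
    refine Finset.sum_congr rfl fun i _ => ?_
    have : ∀ j : Fin n, mulOp n (pVar n j * liftX n (pderiv i (dilVF n j))) ∘ₗ dpOp n i
        = if j = i then mulOp n (pVar n j) ∘ₗ dpOp n i else 0 := by
      intro j
      rw [dilVF, pderiv_X]
      rcases eq_or_ne j i with rfl | h
      · rw [if_pos rfl, Pi.single_eq_same, liftX, map_one, mul_one]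
      · rw [if_neg h, Pi.single_eq_of_ne h, liftX, map_zero, mul_zero, mulOp,
          LinearMap.mulLeft_zero_eq_zero, LinearMap.zero_comp]
    rw [Finset.sum_congr rfl fun j _ => this j]
    simp [eulerOp]
  have h3 : divVF n (dilVF n) = (n : PolyDen n) := by
    rw [divVF]
    have : ∀ i : Fin n, pderiv i (dilVF n i) = 1 := fun i => by rw [dilVF, pderiv_X_self]
    rw [Finset.sum_congr rfl fun i _ => this i]
    simp
  rw [Lop, h1, h2, h3, liftX, map_natCast, mulOp_natCast, smul_smul]


/-- finite set of multi-indices of given degree -/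
def Fs (n s : ℕ) : Finset (Fin n →₀ ℕ) :=
  (Finset.Iic (Finsupp.equivFunOnFinite.symm fun _ : Fin n => s)).filter fun β => deg β = s

lemma mem_Fs {s : ℕ} {β : Fin n →₀ ℕ} : β ∈ Fs n s ↔ deg β = s := by
  constructor
  · exact fun h => (Finset.mem_filter.mp h).2
  · intro h
    refine Finset.mem_filter.mpr ⟨Finset.mem_Iic.mpr ?_, h⟩
    intro i
    simp only [Finsupp.coe_equivFunOnFinite_symm]
    calc β i ≤ ∑ j, β j := Finset.single_le_sum (fun j _ => Nat.zero_le _) (Finset.mem_univ i)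
    _ = s := h

lemma choose_mul_sub (a b : ℕ) : a.choose b * (a - b) = a * ((a - 1).choose b) := by
  cases a with
  | zero => cases b <;> simp
  | succ a => rw [← Nat.choose_succ_right_eq, Nat.succ_sub_one, Nat.add_one_mul_choose_eq]

lemma binP_self (m : Fin n →₀ ℕ) : binP m m = 1 := by
  simp [binP]

lemma exists_lt_of_not_le {m β : Fin n →₀ ℕ} (h : ¬ β ≤ m) : ∃ i, m i < β i := by
  rw [Finsupp.le_def] at h; push_neg at h; exact h

lemma binP_zero_of_not_le {m β : Fin n →₀ ℕ} (h : ¬ β ≤ m) : binP m β = 0 := by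
  obtain ⟨i, hi⟩ := exists_lt_of_not_le h
  exact Finset.prod_eq_zero (Finset.mem_univ i) (Nat.choose_eq_zero_of_lt hi)

lemma deg_lt_of_le_ne {m β : Fin n →₀ ℕ} (h : β ≤ m) (hne : β ≠ m) : deg β < deg m := by
  obtain ⟨i, hi⟩ : ∃ i, β i ≠ m i := by
    by_contra hc; push_neg at hc; exact hne (Finsupp.ext hc)
  exact Finset.sum_lt_sum (fun j _ => h j) ⟨i, Finset.mem_univ i, lt_of_le_of_ne (h i) hi⟩

lemma eq_of_le_deg {m β : Fin n →₀ ℕ} (h : β ≤ m) (hd : deg β = deg m) : β = m := by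
  by_contra hne
  exact absurd hd (Nat.ne_of_lt (deg_lt_of_le_ne h hne))

lemma binP_zero_of_deg_lt {m β : Fin n →₀ ℕ} (h : deg m < deg β) : binP m β = 0 := by
  apply binP_zero_of_not_le
  intro hle
  have : deg β ≤ deg m := Finset.sum_le_sum fun i _ => hle i
  omega

lemma deg_tsub {m β : Fin n →₀ ℕ} (h : β ≤ m) : deg (m - β) = deg m - deg β := by
  have key : deg (m - β) + deg β = deg m := by
    rw [deg, deg, deg, ← Finset.sum_add_distrib]
    exact Finset.sum_congr rfl fun i _ => by
      rw [Finsupp.tsub_apply]; exact Nat.sub_add_cancel (h i)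
  omega

lemma emb_sub_single (m b : Fin n →₀ ℕ) (i : Fin n) :
    emb m b - Finsupp.single (Sum.inl i) 1 = emb (m - Finsupp.single i 1) b := by
  ext a
  rcases a with j | j
  · simp [Finsupp.tsub_apply, Finsupp.single_apply]
  · simp [Finsupp.tsub_apply, Finsupp.single_apply]

lemma pderiv_mono (i : Fin n) (m b : Fin n →₀ ℕ) :
    pderiv (Sum.inl i) (mono m b : PolySym n)
      = (m i : ℝ) • mono (m - Finsupp.single i 1) b := by
  rw [mono, pderiv_monomial, emb_sub_single, emb_apply_inl, mono, smul_monomial,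
    smul_eq_mul, one_mul, mul_one]

lemma binP_rec (m β : Fin n →₀ ℕ) (i : Fin n) :
    binP m β * ((m - β) i) = m i * binP (m - Finsupp.single i 1) β := by
  have h2 : binP (m - Finsupp.single i 1) β
      = ((m i - 1).choose (β i)) * ∏ j ∈ Finset.univ.erase i, (m j).choose (β j) := by
    rw [binP, ← Finset.mul_prod_erase Finset.univ _ (Finset.mem_univ i)]
    congr 1
    · rw [Finsupp.tsub_apply, Finsupp.single_eq_same]
    · refine Finset.prod_congr rfl fun j hj => ?_
      rw [Finsupp.tsub_apply, Finsupp.single_eq_of_ne' (Ne.symm (Finset.mem_erase.mp hj).1),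
        Nat.sub_zero]
  rw [h2, binP, ← Finset.mul_prod_erase Finset.univ _ (Finset.mem_univ i),
    Finsupp.tsub_apply, mul_right_comm, choose_mul_sub, mul_assoc]


@[simp] lemma emb_zero_right (m : Fin n →₀ ℕ) : emb m 0 = xemb m := by
  simp [emb, pemb]
@[simp] lemma emb_zero_left (b : Fin n →₀ ℕ) : emb 0 b = pemb b := by
  simp [emb, xemb]
lemma mono_zero_zero : (mono 0 0 : PolySym n) = 1 := by
  rw [mono]
  simp [xemb]

lemma single_le_of_pos {m : Fin n →₀ ℕ} {i : Fin n} (h : 0 < m i) :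
    Finsupp.single i 1 ≤ m := by
  intro j
  rcases eq_or_ne i j with rfl | hne
  · simp only [Finsupp.single_eq_same]; exact h
  · simp [Finsupp.single_eq_of_ne' hne]

lemma deg_single (i : Fin n) : deg (Finsupp.single i 1) = 1 := by
  simp [deg, Finsupp.single_apply]

section MainA

variable {k l : ℕ} {A : Module.End ℝ (PolySym n)}

/-- commutation with ∂ₓ on top monomials -/
def Hdx (n k : ℕ) (A : Module.End ℝ (PolySym n)) : Prop :=
  ∀ (i : Fin n) (m b : Fin n →₀ ℕ), deg b = k →
    A (pderiv (Sum.inl i) (mono m b)) = pderiv (Sum.inl i) (A (mono m b))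

/-- eigenvalue relation from dilation invariance -/
def Hex (n k l : ℕ) (A : Module.End ℝ (PolySym n)) : Prop :=
  ∀ (m b : Fin n →₀ ℕ), deg b = k →
    exOp n (A (mono m b)) = (((deg m : ℝ) + l) - k) • A (mono m b)

lemma Zlem (hex : Hex n k l A) (m b : Fin n →₀ ℕ) (hb : deg b = k)
    (h : deg m + l < k) : A (mono m b) = 0 := by
  refine negx (hex m b hb) ?_
  have : ((deg m + l : ℕ) : ℝ) < (k : ℕ) := by exact_mod_cast h
  push_cast at this ⊢
  linarith

lemma XH (hex : Hex n k l A) (m b : Fin n →₀ ℕ) (hb : deg b = k) (h : k ≤ deg m + l) :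
    ∀ μ ∈ (A (mono m b)).support, xdeg μ = deg m + l - k := by
  intro μ hμ
  have h1 := eig2x (hex m b hb) μ hμ
  have h2 : ((deg m + l - k : ℕ) : ℝ) = ((deg m : ℝ) + l) - k := by
    push_cast [h]; ring
  rw [← h2] at h1
  exact_mod_cast h1

theorem ML (hl : l < k) (hdx : Hdx n k A) (hex : Hex n k l A) :
    ∀ d m b, deg m = d → deg b = k →
      A (mono m b) = ∑ β ∈ Fs n (k - l),
        (binP m β : ℝ) • ((mono (m - β) 0 : PolySym n) * A (mono β b)) := by
  intro d
  induction d using Nat.strong_induction_on with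
  | _ d IH =>
  intro m b hm hb
  subst hm
  set s := k - l with hs
  have hlk : l ≤ k := Nat.le_of_lt hl
  have hs1 : 1 ≤ s := by omega
  rcases lt_trichotomy (deg m) s with hlt | heq | hgt
  · -- degree too small : both sides zero
    rw [Zlem hex m b hb (by omega)]
    symm
    refine Finset.sum_eq_zero fun β hβ => ?_
    rw [binP_zero_of_deg_lt (by rw [mem_Fs.mp hβ]; exact hlt), Nat.cast_zero, zero_smul]
  · -- base case
    rw [Finset.sum_eq_single_of_mem m (mem_Fs.mpr heq)]
    · rw [binP_self, Nat.cast_one, one_smul, tsub_self, mono_zero_zero, one_mul]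
    · intro β hβ hne
      have hβs := mem_Fs.mp hβ
      have : ¬ β ≤ m := fun hle => hne (eq_of_le_deg hle (by omega))
      rw [binP_zero_of_not_le this, Nat.cast_zero, zero_smul]
  · -- inductive step
    set R : PolySym n := ∑ β ∈ Fs n s,
      (binP m β : ℝ) • ((mono (m - β) 0 : PolySym n) * A (mono β b)) with hR
    have hAq : ∀ (β : Fin n →₀ ℕ) (i : Fin n), deg β = s →
        pderiv (Sum.inl i) (A (mono β b)) = 0 := by
      intro β i hβ
      rw [← hdx i β b hb, pderiv_mono]
      rcases Nat.eq_zero_or_pos (β i) with h0 | h0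
      · rw [h0, Nat.cast_zero, zero_smul, map_zero]
      · rw [map_smul, Zlem hex _ b hb ?_, smul_zero]
        have : deg (β - Finsupp.single i 1) = s - 1 := by
          rw [deg_tsub (single_le_of_pos h0), deg_single, hβ]
        omega
    have hstep : ∀ i : Fin n, pderiv (Sum.inl i) (A (mono m b) - R) = 0 := by
      intro i
      have hL : pderiv (Sum.inl i) (A (mono m b))
          = (m i : ℝ) • A (mono (m - Finsupp.single i 1) b) := by
        rw [← hdx i m b hb, pderiv_mono, map_smul]
      have hRd : pderiv (Sum.inl i) R = ∑ β ∈ Fs n s,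
          ((binP m β * ((m - β) i) : ℕ) : ℝ) •
            ((mono (m - β - Finsupp.single i 1) 0 : PolySym n) * A (mono β b)) := by
        rw [hR, map_sum]
        refine Finset.sum_congr rfl fun β hβ => ?_
        rw [Derivation.map_smul, pderiv_mul, hAq β i (mem_Fs.mp hβ), mul_zero, add_zero,
          pderiv_mono]
        rw [smul_mul_assoc, smul_smul, Nat.cast_mul]
      rw [map_sub, hL, hRd]
      rcases Nat.eq_zero_or_pos (m i) with h0 | h0
      · rw [h0, Nat.cast_zero, zero_smul, zero_sub, neg_eq_zero]
        refine Finset.sum_eq_zero fun β hβ => ?_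
        have : (m - β) i = 0 := by rw [Finsupp.tsub_apply, h0]; exact Nat.zero_sub _
        rw [this, Nat.mul_zero, Nat.cast_zero, zero_smul]
      · have hm' : deg (m - Finsupp.single i 1) = deg m - 1 := by
          rw [deg_tsub (single_le_of_pos h0), deg_single]
        rw [IH (deg m - 1) (by omega) _ b hm' hb, sub_eq_zero, Finset.smul_sum]
        refine Finset.sum_congr rfl fun β hβ => ?_
        have hexp : m - Finsupp.single i 1 - β = m - β - Finsupp.single i 1 := by
          ext a
          simp only [Finsupp.tsub_apply]
          omega
        rw [smul_smul, ← Nat.cast_mul, ← binP_rec m β i, hexp]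
    have he : deg m + l - k = deg m - s := by omega
    have hne0 : deg m - s ≠ 0 := by omega
    have hRW : R ∈ weightedHomogeneousSubmodule ℝ (xwt n) (deg m - s) := by
      refine Submodule.sum_mem _ fun β hβ => ?_
      by_cases hle : β ≤ m
      · refine Submodule.smul_mem _ _ ?_
        have hmono : (mono (m - β) 0 : PolySym n).IsWeightedHomogeneous (xwt n) (deg m - s) := by
          apply isWeightedHomogeneous_monomial
          rw [weight_xwt, emb_zero_right]
          show xdeg (xemb (m - β)) = deg m - s
          have : xdeg (xemb (m - β)) = deg (m - β) := by simp [xdeg, deg]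
          rw [this, deg_tsub hle, mem_Fs.mp hβ]
        have hA0 : (A (mono β b)).IsWeightedHomogeneous (xwt n) 0 := by
          intro μ hc
          rw [weight_xwt]
          have h2 := XH hex β b hb (by rw [mem_Fs.mp hβ]; omega) μ
            (MvPolynomial.mem_support_iff.mpr hc)
          rw [mem_Fs.mp hβ] at h2
          omega
        have := hmono.mul hA0
        rw [add_zero] at this
        exact this
      · rw [binP_zero_of_not_le hle, Nat.cast_zero, zero_smul]
        exact Submodule.zero_mem _
    have hsupp : ∀ μ ∈ (A (mono m b) - R).support, xdeg μ ≠ 0 := by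
      intro μ hμ
      have hc := MvPolynomial.mem_support_iff.mp hμ
      rw [coeff_sub] at hc
      have : coeff μ (A (mono m b)) ≠ 0 ∨ coeff μ R ≠ 0 := by
        by_contra hboth; push_neg at hboth
        rw [hboth.1, hboth.2, sub_zero] at hc; exact hc rfl
      rcases this with h | h
      · rw [XH hex m b hb (by omega) μ (MvPolynomial.mem_support_iff.mpr h), he]
        exact hne0
      · have := hRW (by exact h)
        rw [weight_xwt] at this
        rw [this]  -- xdeg μ = deg m - s : cast issue?
        exact hne0
    have := ker hstep hsupp
    rw [sub_eq_zero] at this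
    exact this

lemma derivMultiSym_monomial (B μ : Fin n ⊕ Fin n →₀ ℕ) (c : ℝ) :
    derivMultiSym n B (monomial μ c)
      = (c * ∏ v, (Nat.descFactorial (μ v) (B v) : ℝ)) • monomial (μ - B) 1 := by
  classical
  rcases eq_or_ne c 0 with rfl | hc
  · rw [monomial_zero, zero_mul, zero_smul]
    simp [derivMultiSym]
  · rw [derivMultiSym]
    rw [support_monomial, if_neg hc, Finset.sum_singleton, coeff_monomial, if_pos rfl]

lemma DM_expand (B : Fin n ⊕ Fin n →₀ ℕ) (P : PolySym n) :
    derivMultiSym n B P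
      = ∑ μ ∈ P.support, coeff μ P • derivMultiSym n B (monomial μ 1) := by
  rw [derivMultiSym]
  refine Finset.sum_congr rfl fun μ _ => ?_
  rw [derivMultiSym_monomial, one_mul, smul_smul]

lemma prod_desc_emb (m b β c : Fin n →₀ ℕ) :
    (∏ v, (Nat.descFactorial (emb m b v) (emb β c v) : ℝ))
      = (descP m β : ℝ) * descP b c := by
  rw [Fintype.prod_sum_type]
  simp only [emb_apply_inl, emb_apply_inr]
  rw [descP, descP]
  push_cast
  ring

lemma emb_sub_emb (m b β c : Fin n →₀ ℕ) : emb m b - emb β c = emb (m - β) (b - c) := by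
  ext a
  rcases a with j | j <;> simp [Finsupp.tsub_apply]

lemma descP_self (b : Fin n →₀ ℕ) : descP b b = factP b := by
  rw [descP, factP]
  exact Finset.prod_congr rfl fun i _ => Nat.descFactorial_self _

lemma descP_zero_of_ne {b c : Fin n →₀ ℕ} (hd : deg c = deg b) (hne : c ≠ b) :
    descP b c = 0 := by
  have : ¬ c ≤ b := fun hle => hne (eq_of_le_deg hle hd)
  obtain ⟨i, hi⟩ := exists_lt_of_not_le this
  exact Finset.prod_eq_zero (Finset.mem_univ i) (Nat.descFactorial_eq_zero_iff_lt.mpr hi)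

lemma descP_factor (m β : Fin n →₀ ℕ) : descP m β = factP β * binP m β := by
  rw [descP, factP, binP, ← Finset.prod_mul_distrib]
  exact Finset.prod_congr rfl fun i _ => Nat.descFactorial_eq_factorial_mul_choose _ _

lemma factP_pos (β : Fin n →₀ ℕ) : 0 < factP β :=
  Finset.prod_pos fun i _ => Nat.factorial_pos _

lemma QasSum {Q : PolySym n} {l0 : ℕ} (hx : ∀ μ ∈ Q.support, xdeg μ = 0)
    (hp : ∀ μ ∈ Q.support, pdeg μ = l0) :
    Q = ∑ a ∈ Fs n l0, monomial (pemb a) (coeff (pemb a) Q) := by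
  have hsub : Q.support ⊆ (Fs n l0).image pemb := by
    intro μ hμ
    have hx0 : ∀ j, μ (Sum.inl j) = 0 := by
      have := hx μ hμ
      rw [xdeg] at this
      intro j
      exact (Finset.sum_eq_zero_iff.mp this) j (Finset.mem_univ j)
    have h1 : μ = pemb (Finsupp.equivFunOnFinite.symm fun i => μ (Sum.inr i)) := by
      ext a
      rcases a with j | j
      · rw [pemb_apply_inl, hx0 j]
      · rw [pemb_apply_inr, Finsupp.coe_equivFunOnFinite_symm]
    refine Finset.mem_image.mpr ⟨_, mem_Fs.mpr ?_, h1.symm⟩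
    rw [deg]
    simp only [Finsupp.coe_equivFunOnFinite_symm]
    exact hp μ hμ
  have h2 : Q = ∑ μ ∈ (Fs n l0).image pemb, monomial μ (coeff μ Q) := by
    conv_lhs => rw [Q.as_sum]
    refine Finset.sum_subset hsub fun μ _ h => ?_
    rw [MvPolynomial.notMem_support_iff.mp h, map_zero]
  conv_lhs => rw [h2]
  exact Finset.sum_image fun x _ y _ hxy =>
    Finsupp.mapDomain_injective Sum.inr_injective hxy

lemma pMonomial_eq (a : Fin n →₀ ℕ) : pMonomial n a = monomial (pemb a) 1 := rfl

lemma emb_def (m b : Fin n →₀ ℕ) :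
    m.mapDomain Sum.inl + b.mapDomain Sum.inr = emb m b := rfl

end MainA
end St11

open St11

/-- Any operator `A` from weight-`δ` symbols homogeneous of degree `k` in `p`
to those of degree `l < k` commuting with the actions of the translations and of the dilation
is a differential operator with constant coefficients in the generators `p_i`, `∂_{x^i}`,
`∂_{p_i}`, whose degree in `∂_x` equals its degree in `∂_p` minus its degree in `p` (and with
degree at most `k` in `∂_p`); hence the space of such invariant operators is
finite-dimensional and independent of `δ`. -/
theorem affine_invariant_operators_are_differential (n k l : ℕ) (hl : l < k) (δ : ℝ)
    (A : Module.End ℝ (PolySym n))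
    (hdeg : ∀ P : PolySym n, IsPHomog n P k → IsPHomog n (A P) l)
    (hinv : ∀ Xf ∈ Set.range (transVF n) ∪ {dilVF n}, ∀ P : PolySym n, IsPHomog n P k →
      A (Lop n δ Xf P) = Lop n δ Xf (A P)) :
    (∃ coef : ((Fin n →₀ ℕ) × (Fin n →₀ ℕ) × (Fin n →₀ ℕ)) →₀ ℝ,
      (∀ t ∈ coef.support,
        (t.1.sum fun _ e => e) + (t.2.1.sum fun _ e => e) = (t.2.2.sum fun _ e => e) ∧
        (t.2.2.sum fun _ e => e) ≤ k) ∧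
      ∀ P : PolySym n, IsPHomog n P k →
        A P = coef.sum fun t cc => cc • (pMonomial n t.1 *
          derivMultiSym n (t.2.1.mapDomain Sum.inl + t.2.2.mapDomain Sum.inr) P)) ∧
    (∀ δ' : ℝ, ∀ Xf ∈ Set.range (transVF n) ∪ {dilVF n}, ∀ P : PolySym n, IsPHomog n P k →
      A (Lop n δ' Xf P) = Lop n δ' Xf (A P)) := by
  classical
  have hlk : l ≤ k := Nat.le_of_lt hl
  -- derived commutation hypotheses
  have hdx : Hdx n k A := by
    intro i m b hb
    have h := hinv _ (Or.inl ⟨i, rfl⟩) (mono m b) (isPHomog_mono hb)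
    rw [Lop_trans] at h
    exact h
  have hexA : Hex n k l A := by
    intro m b hb
    have hP : IsPHomog n (mono m b) k := isPHomog_mono hb
    have hxm : exOp n (mono m b) = ((deg m : ℕ) : ℝ) • mono m b := by
      refine eig1x fun μ hμ => ?_
      rw [mono, support_monomial, if_neg one_ne_zero, Finset.mem_singleton] at hμ
      rw [hμ, xdeg_emb]
    have hpm : eulerOp n (mono m b) = ((k : ℕ) : ℝ) • mono m b := by
      refine eig1p fun μ hμ => ?_
      rw [mono, support_monomial, if_neg one_ne_zero, Finset.mem_singleton] at hμ
      rw [hμ, pdeg_emb, hb]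
    have hl2 : eulerOp n (A (mono m b)) = ((l : ℕ) : ℝ) • A (mono m b) :=
      eig1p fun μ hμ => phomog_support (hdeg _ hP) hμ
    have h := hinv _ (Or.inr rfl) _ hP
    rw [Lop_dil] at h
    simp only [LinearMap.add_apply, LinearMap.sub_apply, LinearMap.smul_apply,
      Module.End.one_apply] at h
    rw [hxm, hpm, map_add, map_sub, map_smul, map_smul, map_smul, hl2] at h
    have h2 := add_right_cancel h
    have h3 : exOp n (A (mono m b)) = ((deg m : ℕ) : ℝ) • A (mono m b)
        - ((k : ℕ) : ℝ) • A (mono m b) + ((l : ℕ) : ℝ) • A (mono m b) := by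
      rw [h2, sub_add_cancel]
    rw [h3, sub_smul, add_smul]
    abel
  have hML := ML hl hdx hexA
  -- the finite index set and coefficient function
  set T : Finset ((Fin n →₀ ℕ) × (Fin n →₀ ℕ) × (Fin n →₀ ℕ)) :=
    (Fs n l) ×ˢ ((Fs n (k - l)) ×ˢ (Fs n k)) with hT
  set cf : (Fin n →₀ ℕ) × (Fin n →₀ ℕ) × (Fin n →₀ ℕ) → ℝ := fun t =>
    if t ∈ T then coeff (pemb t.1) (A (mono t.2.1 t.2.2)) / ((factP t.2.2 : ℝ) * factP t.2.1)
    else 0 with hcf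
  have hcf0 : ∀ t, cf t ≠ 0 → t ∈ T := by
    intro t h
    by_contra hn
    rw [hcf] at h
    simp only [if_neg hn] at h
    exact h rfl
  -- evaluation on monomials
  have hMONO : ∀ m b : Fin n →₀ ℕ, deg b = k →
      A (mono m b) = ∑ t ∈ T,
        cf t • (pMonomial n t.1 * derivMultiSym n (emb t.2.1 t.2.2) (mono m b)) := by
    intro m b hb
    have hterm : ∀ β c : Fin n →₀ ℕ, derivMultiSym n (emb β c) (mono m b)
        = ((descP m β : ℝ) * descP b c) • monomial (emb (m - β) (b - c)) 1 := by
      intro β c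
      rw [mono, derivMultiSym_monomial, one_mul, prod_desc_emb, emb_sub_emb]
    have hq : ∀ β ∈ Fs n (k - l), A (mono β b) = ∑ a ∈ Fs n l,
        monomial (pemb a) (coeff (pemb a) (A (mono β b))) := by
      intro β hβ
      refine QasSum (fun μ hμ => ?_)
        (fun μ hμ => phomog_support (hdeg _ (isPHomog_mono hb)) hμ)
      have h2 := XH hexA β b hb (by rw [mem_Fs.mp hβ]; omega) μ hμ
      rw [mem_Fs.mp hβ] at h2
      omega
    have hRHS : ∑ t ∈ T,
        cf t • (pMonomial n t.1 * derivMultiSym n (emb t.2.1 t.2.2) (mono m b))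
        = ∑ a ∈ Fs n l, ∑ β ∈ Fs n (k - l),
            ((binP m β : ℝ) * coeff (pemb a) (A (mono β b))) •
              monomial (pemb a + xemb (m - β)) 1 := by
      rw [hT]
      rw [Finset.sum_product]
      refine Finset.sum_congr rfl fun a ha => ?_
      rw [Finset.sum_product]
      refine Finset.sum_congr rfl fun β hβ => ?_
      have hvan : ∀ c ∈ Fs n k, c ≠ b →
          cf (a, β, c) • (pMonomial n a * derivMultiSym n (emb β c) (mono m b)) = 0 := by
        intro c hc hne
        rw [hterm, descP_zero_of_ne (by rw [mem_Fs.mp hc, hb]) hne, Nat.cast_zero, mul_zero,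
          zero_smul, mul_zero, smul_zero]
      rw [Finset.sum_eq_single_of_mem b (mem_Fs.mpr hb) hvan]
      have hmem : ((a, β, b) : (Fin n →₀ ℕ) × (Fin n →₀ ℕ) × (Fin n →₀ ℕ)) ∈ T := by
        rw [hT]
        exact Finset.mem_product.mpr ⟨ha, Finset.mem_product.mpr ⟨hβ, mem_Fs.mpr hb⟩⟩
      have hcfv : cf (a, β, b)
          = coeff (pemb a) (A (mono β b)) / ((factP b : ℝ) * factP β) := by
        rw [hcf]
        simp only [if_pos hmem]
      have hpoly : pMonomial n a * monomial (xemb (m - β)) 1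
          = monomial (pemb a + xemb (m - β)) 1 := by
        rw [pMonomial_eq, monomial_mul, mul_one]
      rw [hterm, tsub_self, emb_zero_right, descP_self, mul_smul_comm, hpoly, smul_smul, hcfv]
      congr 1
      rw [descP_factor]
      have h1 : (factP b : ℝ) ≠ 0 := by exact_mod_cast (factP_pos b).ne'
      have h2 : (factP β : ℝ) ≠ 0 := by exact_mod_cast (factP_pos β).ne'
      push_cast
      field_simp
    rw [hRHS, hML (deg m) m b rfl hb, Finset.sum_comm]
    refine Finset.sum_congr rfl fun β hβ => ?_
    conv_lhs => rw [hq β hβ]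
    rw [Finset.mul_sum, Finset.smul_sum]
    refine Finset.sum_congr rfl fun a _ => ?_
    rw [mono, emb_zero_right, monomial_mul, one_mul, add_comm (pemb a) (xemb (m - β)),
      smul_monomial, smul_monomial, smul_eq_mul, smul_eq_mul, mul_one]
  -- general evaluation
  have hmain : ∀ P : PolySym n, IsPHomog n P k →
      A P = ∑ t ∈ T, cf t • (pMonomial n t.1 * derivMultiSym n (emb t.2.1 t.2.2) P) := by
    intro P hP
    have hdecomp : ∀ μ ∈ P.support, ∃ m b : Fin n →₀ ℕ, μ = emb m b ∧ deg b = k := by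
      intro μ hμ
      refine ⟨Finsupp.equivFunOnFinite.symm fun i => μ (Sum.inl i),
        Finsupp.equivFunOnFinite.symm fun i => μ (Sum.inr i), ?_, ?_⟩
      · ext a
        rcases a with j | j <;>
          simp [Finsupp.coe_equivFunOnFinite_symm]
      · rw [deg]
        simp only [Finsupp.coe_equivFunOnFinite_symm]
        exact phomog_support hP hμ
    calc A P = ∑ μ ∈ P.support, coeff μ P • A (monomial μ 1) := by
          conv_lhs => rw [P.as_sum]
          rw [map_sum]
          refine Finset.sum_congr rfl fun μ _ => ?_
          rw [← map_smul, smul_monomial, smul_eq_mul, mul_one]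
      _ = ∑ μ ∈ P.support, coeff μ P •
            ∑ t ∈ T, cf t •
              (pMonomial n t.1 * derivMultiSym n (emb t.2.1 t.2.2) (monomial μ 1)) := by
          refine Finset.sum_congr rfl fun μ hμ => ?_
          obtain ⟨m, b, rfl, hbk⟩ := hdecomp μ hμ
          rw [show (monomial (emb m b) (1:ℝ)) = mono m b from rfl, hMONO m b hbk]
      _ = ∑ μ ∈ P.support, ∑ t ∈ T, coeff μ P •
            (cf t • (pMonomial n t.1 * derivMultiSym n (emb t.2.1 t.2.2) (monomial μ 1))) := by
          exact Finset.sum_congr rfl fun μ _ => Finset.smul_sum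
      _ = ∑ t ∈ T, ∑ μ ∈ P.support, coeff μ P •
            (cf t • (pMonomial n t.1 * derivMultiSym n (emb t.2.1 t.2.2) (monomial μ 1))) :=
          Finset.sum_comm
      _ = ∑ t ∈ T, cf t • (pMonomial n t.1 * derivMultiSym n (emb t.2.1 t.2.2) P) := by
          refine Finset.sum_congr rfl fun t _ => ?_
          rw [DM_expand (emb t.2.1 t.2.2) P, Finset.mul_sum, Finset.smul_sum]
          refine Finset.sum_congr rfl fun μ _ => ?_
          rw [mul_smul_comm, smul_comm]
  refine ⟨⟨Finsupp.onFinset T cf hcf0, ?_, ?_⟩, ?_⟩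
  · -- support conditions
    intro t ht
    have h1 : cf t ≠ 0 := by
      rw [Finsupp.mem_support_iff] at ht
      simpa using ht
    have h2 := hcf0 t h1
    rw [hT, Finset.mem_product] at h2
    obtain ⟨ha, h3⟩ := h2
    rw [Finset.mem_product] at h3
    obtain ⟨hβ, hc⟩ := h3
    rw [deg_eq_sum, deg_eq_sum, deg_eq_sum, mem_Fs.mp ha, mem_Fs.mp hβ, mem_Fs.mp hc]
    omega
  · -- the formula
    intro P hP
    rw [Finsupp.sum_of_support_subset _ Finsupp.support_onFinset_subset _
      (fun t _ => by rw [zero_smul])]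
    simp only [Finsupp.onFinset_apply, emb_def]
    exact hmain P hP
  · -- independence of the weight
    intro δ' Xf hXf P hP
    rcases hXf with ⟨i, rfl⟩ | h1
    · have h := hinv _ (Or.inl ⟨i, rfl⟩) P hP
      rw [Lop_trans] at h
      rw [Lop_trans]
      exact h
    · rw [Set.mem_singleton_iff] at h1
      subst h1
      have h := hinv _ (Or.inr rfl) P hP
      rw [Lop_dil] at h
      rw [Lop_dil]
      simp only [LinearMap.add_apply, LinearMap.sub_apply, LinearMap.smul_apply,
        Module.End.one_apply] at h ⊢
      rw [map_add, map_sub, map_smul] at h ⊢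
      have key := add_right_cancel h
      rw [key]
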